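/- arXiv:2111.10693 — 2 statements merged into one kernel-verified Lean document; each statement's English description precedes it below -/
import Mathlib

section
/- Let n ≥ 1, p > 0, and let x : [0, ∞) → ℝⁿ be continuously differentiable with x(0) = x₀ ≠ 0. Suppose that ẋ(t) = −(2/3)·p^{2/3}·‖x(t)‖^{−2/3}·x(t) whenever x(t) ≠ 0, and that x(t) = 0 implies x(s) = 0 for all s ≥ t. Then x(t) = 0 for all t ≥ T*, where T* = (9/4)·p^{−2/3}·‖x₀‖^{2/3}; in particular the origin is reached in finite time. -/
open Set Real

/-- Finite-time convergence of the closed-loop gradient system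
`ẋ = −(2/3) p^{2/3} ‖x‖^{−2/3} x`: the state reaches the origin by the time
`T* = (9/4) p^{−2/3} ‖x₀‖^{2/3}` and remains there. -/
theorem finite_time_convergence (n : ℕ) (hn : 1 ≤ n) (p : ℝ) (hp : 0 < p)
    (x : ℝ → EuclideanSpace ℝ (Fin n)) (x₀ : EuclideanSpace ℝ (Fin n))
    (hx0 : x 0 = x₀) (hx0ne : x₀ ≠ 0)
    (hC1 : ContDiffOn ℝ 1 x (Set.Ici 0))
    (hode : ∀ t ∈ Set.Ici (0 : ℝ), x t ≠ 0 →
      HasDerivWithinAt x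
        ((-(2 / 3) * p ^ ((2 : ℝ) / 3) * ‖x t‖ ^ (-(2 : ℝ) / 3)) • x t) (Set.Ici 0) t)
    (habs : ∀ t ∈ Set.Ici (0 : ℝ), x t = 0 → ∀ s ≥ t, x s = 0) :
    ∀ t ≥ (9 / 4) * p ^ (-(2 : ℝ) / 3) * ‖x₀‖ ^ ((2 : ℝ) / 3), x t = 0 := by
  set c : ℝ := p ^ ((2 : ℝ) / 3) with hc
  have hcpos : 0 < c := Real.rpow_pos_of_pos hp _
  intro t ht
  by_contra hxt
  have hTpos : 0 < (9 / 4) * p ^ (-(2 : ℝ) / 3) * ‖x₀‖ ^ ((2 : ℝ) / 3) := by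
    have h1 : (0:ℝ) < p ^ (-(2 : ℝ) / 3) := Real.rpow_pos_of_pos hp _
    have h2 : (0:ℝ) < ‖x₀‖ ^ ((2 : ℝ) / 3) :=
      Real.rpow_pos_of_pos (norm_pos_iff.mpr hx0ne) _
    positivity
  have htpos : 0 < t := lt_of_lt_of_le hTpos ht
  -- x s ≠ 0 on [0, t]
  have hne : ∀ s ∈ Icc (0:ℝ) t, x s ≠ 0 := by
    intro s hs h0
    exact hxt (habs s hs.1 h0 t hs.2)
  set f : ℝ → ℝ := fun s => (inner ℝ (x s) (x s) : ℝ) with hf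
  have hfeq : ∀ s, f s = ‖x s‖ ^ (2:ℕ) := fun s => real_inner_self_eq_norm_sq (x s)
  set F : ℝ → ℝ := fun s => f s ^ ((1:ℝ)/3) with hF
  set φ : ℝ → ℝ := fun s => F s + (4/9) * c * s with hφ
  -- derivative of φ is 0
  have hderiv : ∀ s ∈ Ico (0:ℝ) t, HasDerivWithinAt φ 0 (Ici s) s := by
    intro s hs
    have hsmem : s ∈ Icc (0:ℝ) t := ⟨hs.1, hs.2.le⟩
    have hxs : x s ≠ 0 := hne s hsmem
    have hns : (0:ℝ) < ‖x s‖ := norm_pos_iff.mpr hxs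
    have hx' : HasDerivWithinAt x
        ((-(2 / 3) * c * ‖x s‖ ^ (-(2 : ℝ) / 3)) • x s) (Ici s) s :=
      (hode s hs.1 hxs).mono (Ici_subset_Ici.mpr hs.1)
    have hfd : HasDerivWithinAt f
        (-(4/3) * c * ‖x s‖ ^ ((4:ℝ)/3)) (Ici s) s := by
      have := hx'.inner ℝ hx'
      convert this using 1
      · rfl
      · rfl
      rw [real_inner_smul_right, real_inner_smul_left, real_inner_self_eq_norm_sq]
      have : ‖x s‖ ^ (-(2 : ℝ) / 3) * ‖x s‖ ^ 2 = ‖x s‖ ^ ((4:ℝ)/3) := by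
        rw [← Real.rpow_two, ← Real.rpow_add hns]; norm_num
      rw [mul_assoc, mul_assoc, this]; ring
    have hfs : f s = ‖x s‖ ^ ((2:ℝ)) := by
      rw [hfeq, ← Real.rpow_natCast]; norm_num
    have hfsne : f s ≠ 0 := by
      rw [hfs]; exact ne_of_gt (Real.rpow_pos_of_pos hns _)
    have hFd : HasDerivWithinAt F (-(4/9) * c) (Ici s) s := by
      have := hfd.rpow_const (p := (1:ℝ)/3) (Or.inl hfsne)
      convert this using 1
      rw [hfs, ← Real.rpow_mul hns.le]
      have hmul : ‖x s‖ ^ ((4:ℝ)/3) * ‖x s‖ ^ ((2:ℝ)*((1:ℝ)/3-1)) = 1 := by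
        rw [← Real.rpow_add hns]; norm_num
      linear_combination ((4:ℝ)/9 * c) * hmul
    have : HasDerivWithinAt φ (-(4/9)*c + (4/9)*c) (Ici s) s := by
      refine hFd.add ?_
      have := (hasDerivWithinAt_id s (Ici s)).const_mul ((4:ℝ)/9 * c)
      simpa using this
    simpa using this
  -- continuity of φ
  have hxcont : ContinuousOn x (Icc 0 t) :=
    hC1.continuousOn.mono (Icc_subset_Ici_self)
  have hfcont : ContinuousOn f (Icc 0 t) := hxcont.inner hxcont
  have hFcont : ContinuousOn F (Icc 0 t) :=
    hfcont.rpow_const (fun s _ => Or.inr (by norm_num))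
  have hφcont : ContinuousOn φ (Icc 0 t) :=
    hFcont.add ((continuous_const.mul continuous_id).continuousOn)
  have hconst := constant_of_has_deriv_right_zero hφcont hderiv t
    (right_mem_Icc.mpr htpos.le)
  -- unfold φ t = φ 0
  have hφt : F t + (4/9)*c*t = F 0 := by
    have := hconst
    simp only [hφ] at this
    linarith [this]
  have hF0 : F 0 = ‖x₀‖ ^ ((2:ℝ)/3) := by
    have hf0 : f 0 = ‖x₀‖ ^ ((2:ℝ)) := by
      rw [hfeq, hx0, ← Real.rpow_natCast]; norm_num
    rw [hF]
    simp only
    rw [hf0, ← Real.rpow_mul (norm_nonneg _)]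
    norm_num
  have hFtpos : 0 < F t := by
    have : 0 < f t := by
      rw [hfeq]
      exact pow_pos (norm_pos_iff.mpr hxt) 2
    exact Real.rpow_pos_of_pos this _
  have hcp : c * p ^ (-(2:ℝ)/3) = 1 := by
    rw [hc, ← Real.rpow_add hp]; norm_num
  have h1 : (4/9)*c*t ≥ (4/9)*c*((9 / 4) * p ^ (-(2 : ℝ) / 3) * ‖x₀‖ ^ ((2 : ℝ) / 3)) := by
    have := mul_le_mul_of_nonneg_left ht (by positivity : (0:ℝ) ≤ (4/9)*c)
    linarith
  have h2 : (4/9)*c*((9 / 4) * p ^ (-(2 : ℝ) / 3) * ‖x₀‖ ^ ((2 : ℝ) / 3))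
      = ‖x₀‖ ^ ((2 : ℝ) / 3) := by
    have := hcp
    nlinarith [Real.rpow_pos_of_pos (norm_pos_iff.mpr hx0ne) ((2:ℝ)/3)]
  rw [hF0] at hφt
  nlinarith
end

section
/- Let n ≥ 1, p > 0, and let x : [0, ∞) → ℝⁿ be continuously differentiable satisfying ẋ(t) = −(2/3)·p^{2/3}·‖x(t)‖^{−2/3}·x(t) whenever x(t) ≠ 0. Then on any interval on which x(t) ≠ 0, the function t ↦ (‖x(t)‖²)^{1/3} is differentiable with constant derivative −(4/9)·p^{2/3}; i.e., (‖x(t)‖²)^{1/3} = (‖x(t₀)‖²)^{1/3} − (4/9)·p^{2/3}·(t − t₀) for t ≥ t₀ in that interval. -/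
/-- Along nonzero solutions of `ẋ = −(2/3) p^{2/3} ‖x‖^{−2/3} x`, the quantity
`(‖x(t)‖²)^{1/3}` is differentiable with constant derivative `−(4/9) p^{2/3}`;
hence it decreases affinely in time on any interval where `x ≠ 0`. -/
theorem constant_rate_decrease (n : ℕ) (hn : 1 ≤ n) (p : ℝ) (hp : 0 < p)
    (x : ℝ → EuclideanSpace ℝ (Fin n))
    (hC1 : ContDiffOn ℝ 1 x (Set.Ici 0))
    (hode : ∀ t ∈ Set.Ici (0 : ℝ), x t ≠ 0 →
      HasDerivWithinAt x
        ((-(2 / 3) * p ^ ((2 : ℝ) / 3) * ‖x t‖ ^ (-(2 : ℝ) / 3)) • x t) (Set.Ici 0) t) :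
    ∀ t₀ t₁ : ℝ, 0 ≤ t₀ → t₀ ≤ t₁ → (∀ s ∈ Set.Icc t₀ t₁, x s ≠ 0) →
      (∀ t ∈ Set.Icc t₀ t₁,
        HasDerivWithinAt (fun s => (‖x s‖ ^ 2) ^ ((1 : ℝ) / 3))
          (-(4 / 9) * p ^ ((2 : ℝ) / 3)) (Set.Icc t₀ t₁) t) ∧
      (∀ t ∈ Set.Icc t₀ t₁,
        (‖x t‖ ^ 2) ^ ((1 : ℝ) / 3)
          = (‖x t₀‖ ^ 2) ^ ((1 : ℝ) / 3) - (4 / 9) * p ^ ((2 : ℝ) / 3) * (t - t₀)) := by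
  intro t₀ t₁ ht₀ ht₀₁ hne
  have hsub : Set.Icc t₀ t₁ ⊆ Set.Ici (0 : ℝ) := fun s hs => le_trans ht₀ hs.1
  have key : ∀ t ∈ Set.Icc t₀ t₁,
      HasDerivWithinAt (fun s => (‖x s‖ ^ 2) ^ ((1 : ℝ) / 3))
        (-(4 / 9) * p ^ ((2 : ℝ) / 3)) (Set.Icc t₀ t₁) t := by
    intro t ht
    have hxt : x t ≠ 0 := hne t ht
    have hnorm : (0 : ℝ) < ‖x t‖ := norm_pos_iff.2 hxt
    set c : ℝ := -(2 / 3) * p ^ ((2 : ℝ) / 3) * ‖x t‖ ^ (-(2 : ℝ) / 3) with hc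
    have hx' : HasDerivWithinAt x (c • x t) (Set.Icc t₀ t₁) t :=
      (hode t (hsub ht) hxt).mono hsub
    have hinner : HasDerivWithinAt (fun s => (inner ℝ (x s) (x s) : ℝ))
        ((inner ℝ (x t) (c • x t) : ℝ) + (inner ℝ (c • x t) (x t) : ℝ)) (Set.Icc t₀ t₁) t :=
      hx'.inner ℝ hx'
    have hval : (inner ℝ (x t) (c • x t) : ℝ) + (inner ℝ (c • x t) (x t) : ℝ)
        = 2 * c * ‖x t‖ ^ 2 := by
      rw [real_inner_smul_right, real_inner_smul_left, real_inner_self_eq_norm_sq]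
      ring
    have hinner2 : HasDerivWithinAt (fun s => ‖x s‖ ^ 2)
        (2 * c * ‖x t‖ ^ 2) (Set.Icc t₀ t₁) t := by
      rw [← hval]
      refine hinner.congr (fun s _ => ?_) ?_ <;>
        exact (real_inner_self_eq_norm_sq _).symm
    have hne2 : (‖x t‖ : ℝ) ^ 2 ≠ 0 := by positivity
    have hrpow := hinner2.rpow_const (p := (1 : ℝ) / 3) (Or.inl hne2)
    convert hrpow using 1
    have h1 : (‖x t‖ ^ 2 : ℝ) ^ ((1 : ℝ) / 3 - 1)
        = ‖x t‖ ^ (-(4 : ℝ) / 3) := by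
      rw [← Real.rpow_natCast (‖x t‖) 2, ← Real.rpow_mul hnorm.le]
      norm_num
    have key3 : ‖x t‖ ^ (-(2 : ℝ) / 3) * ‖x t‖ ^ ((2 : ℕ) : ℝ) * ‖x t‖ ^ (-(4 : ℝ) / 3)
        = 1 := by
      rw [← Real.rpow_add hnorm, ← Real.rpow_add hnorm]
      norm_num
    rw [h1, hc, ← Real.rpow_natCast (‖x t‖) 2]
    linear_combination ((4 : ℝ) / 9) * p ^ ((2 : ℝ) / 3) * key3
  refine ⟨key, ?_⟩
  intro t ht
  have hcont : ContinuousOn (fun s => (‖x s‖ ^ 2) ^ ((1 : ℝ) / 3)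
      + (4 / 9) * p ^ ((2 : ℝ) / 3) * s) (Set.Icc t₀ t₁) := by
    intro s hs
    exact ((key s hs).add ((hasDerivWithinAt_id s _).const_mul
      ((4 / 9) * p ^ ((2 : ℝ) / 3)))).continuousWithinAt
  have hzero : ∀ s ∈ Set.Ico t₀ t₁,
      HasDerivWithinAt (fun s => (‖x s‖ ^ 2) ^ ((1 : ℝ) / 3)
        + (4 / 9) * p ^ ((2 : ℝ) / 3) * s) 0 (Set.Ici s) s := by
    intro s hs
    have := ((key s ⟨hs.1, hs.2.le⟩).add ((hasDerivWithinAt_id s _).const_mul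
      ((4 / 9) * p ^ ((2 : ℝ) / 3)))).mono_of_mem_nhdsWithin (Icc_mem_nhdsGE_of_mem hs)
    refine this.congr_deriv ?_
    ring
  have := constant_of_has_deriv_right_zero hcont hzero t ht
  have h0 := this
  linarith [h0]
end
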